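/- Under the same setting (standard Gaussian target in dimension d ≥ 2, proposal N(y|rx, c²I_d), F(x) = x^{(j)}, unique mean-zero solution F̂⁰ of the Poisson equation), F̂⁰ is an even function in each remaining coordinate x^{(j')}, j' ≠ j, and for d ≥ 3 it is invariant under any permutation of the remaining coordinates: F̂⁰(x^{(j)}, x^{(−j)}) = F̂⁰(x^{(j)}, Π x^{(−j)}) for every permutation matrix Π acting on the coordinates other than j. -/

import Mathlib

open MeasureTheory Real

/-- Squared Euclidean norm on `ℝ^d`. -/
noncomputable def sqnorm {d : ℕ} (x : Fin d → ℝ) : ℝ := ∑ i, x i ^ 2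

/-- Density of the `d`-variate Gaussian `N(m, v I_d)` (variance `v` per coordinate). -/
noncomputable def gpdf {d : ℕ} (m : Fin d → ℝ) (v : ℝ) (x : Fin d → ℝ) : ℝ :=
  (2 * Real.pi * v) ^ (-(d : ℝ) / 2) * Real.exp (-(sqnorm (x - m)) / (2 * v))

/-- The `d`-variate Gaussian measure `N(m, v I_d)` defined via its density. -/
noncomputable def gaussMeasure {d : ℕ} (m : Fin d → ℝ) (v : ℝ) : Measure (Fin d → ℝ) :=
  volume.withDensity (fun x => ENNReal.ofReal (gpdf m v x))

/-- Acceptance probability `α(x,y) = min{1, exp(-(τ²/2)(yᵀy - xᵀx))}` for the standard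
Gaussian target. -/
noncomputable def accept {d : ℕ} (τ : ℝ) (x y : Fin d → ℝ) : ℝ :=
  min 1 (Real.exp (-(τ ^ 2 / 2) * (sqnorm y - sqnorm x)))

/-- The sign-flip-and-permute measurable equivalence. -/
def flipPerm {d : ℕ} (σ : Equiv.Perm (Fin d)) (s : Fin d → ℝ)
    (hs : ∀ i, s i = 1 ∨ s i = -1) : (Fin d → ℝ) ≃ᵐ (Fin d → ℝ) where
  toFun x := fun i => s i * x (σ i)
  invFun y := fun i => s (σ⁻¹ i) * y (σ⁻¹ i)
  left_inv x := by
    funext k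
    have h : s (σ⁻¹ k) * s (σ⁻¹ k) = 1 := by
      rcases hs (σ⁻¹ k) with h | h <;> rw [h] <;> norm_num
    simp only [← mul_assoc, h, one_mul, (Equiv.Perm.eq_inv_iff_eq.mp rfl : σ (σ⁻¹ k) = k)]
  right_inv y := by
    funext k
    have h : s k * s k = 1 := by rcases hs k with h | h <;> rw [h] <;> norm_num
    simp only [(Equiv.Perm.inv_eq_iff_eq.mpr rfl : σ⁻¹ (σ k) = k), ← mul_assoc, h, one_mul]
  measurable_toFun := measurable_pi_iff.mpr fun i => (measurable_pi_apply _).const_mul _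
  measurable_invFun := measurable_pi_iff.mpr fun i => (measurable_pi_apply _).const_mul _

lemma flipPerm_mp {d : ℕ} (σ : Equiv.Perm (Fin d)) (s : Fin d → ℝ)
    (hs : ∀ i, s i = 1 ∨ s i = -1) :
    MeasurePreserving (flipPerm σ s hs) volume volume := by
  have hP : MeasurePreserving (fun x : Fin d → ℝ => fun i => x (σ i)) volume volume := by
    have h := volume_preserving_arrowCongr' σ.symm (MeasurableEquiv.refl ℝ)
      (MeasurePreserving.id _)
    convert h using 1 <;> rfl
  have hmul : ∀ t0 : ℝ, t0 = 1 ∨ t0 = -1 →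
      MeasurePreserving (fun t : ℝ => t0 * t) volume volume := by
    rintro t0 (rfl | rfl)
    · simp only [one_mul]
      exact MeasurePreserving.id _
    · simp only [neg_one_mul]
      exact Measure.measurePreserving_neg _
  have hS : MeasurePreserving (fun (a : Fin d → ℝ) (i : Fin d) => s i * a i) volume volume :=
    volume_preserving_pi (fun i => hmul (s i) (hs i))
  exact hS.comp hP

lemma sqnorm_flipPerm {d : ℕ} (σ : Equiv.Perm (Fin d)) (s : Fin d → ℝ)
    (hs : ∀ i, s i = 1 ∨ s i = -1) (x : Fin d → ℝ) :
    sqnorm (flipPerm σ s hs x) = sqnorm x := by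
  unfold sqnorm
  have h : ∀ i : Fin d, (flipPerm σ s hs x) i ^ 2 = x (σ i) ^ 2 := by
    intro i
    show (s i * x (σ i)) ^ 2 = _
    rcases hs i with h | h <;> rw [h] <;> ring
  rw [Finset.sum_congr rfl fun i _ => h i]
  exact Equiv.sum_comp σ (fun i => x i ^ 2)

lemma gpdf_measurable {d : ℕ} (m : Fin d → ℝ) (v : ℝ) : Measurable (gpdf m v) := by
  unfold gpdf sqnorm
  fun_prop

lemma key_invariance {d : ℕ} (j : Fin d) (r c τ : ℝ)
    (Fhat : (Fin d → ℝ) → ℝ)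
    (hsol : ∀ x : Fin d → ℝ,
      ∫ y, accept τ x y * (Fhat y - Fhat x) * gpdf (r • x) (c ^ 2) y = -(x j))
    (hmean : ∫ x, Fhat x ∂(gaussMeasure (0 : Fin d → ℝ) 1) = 0)
    (huniq : ∀ H : (Fin d → ℝ) → ℝ,
      (∀ x : Fin d → ℝ,
        ∫ y, accept τ x y * (H y - H x) * gpdf (r • x) (c ^ 2) y = -(x j)) →
      (∫ x, H x ∂(gaussMeasure (0 : Fin d → ℝ) 1) = 0) → H = Fhat)
    (σ : Equiv.Perm (Fin d)) (s : Fin d → ℝ) (hs : ∀ i, s i = 1 ∨ s i = -1)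
    (hσj : σ j = j) (hsj : s j = 1) :
    ∀ x : Fin d → ℝ, Fhat (fun i => s i * x (σ i)) = Fhat x := by
  set T := flipPerm σ s hs with hT
  have hmp := flipPerm_mp σ s hs
  have hsq : ∀ z, sqnorm (T z) = sqnorm z := sqnorm_flipPerm σ s hs
  have hsub : ∀ a b : Fin d → ℝ, T (a - b) = T a - T b := by
    intro a b; funext i
    show s i * (a - b) (σ i) = s i * a (σ i) - s i * b (σ i)
    simp only [Pi.sub_apply]; ring
  have hsmul : ∀ (t : ℝ) (a : Fin d → ℝ), T (t • a) = t • T a := by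
    intro t a; funext i
    show s i * (t • a) (σ i) = t • (s i * a (σ i))
    simp only [Pi.smul_apply, smul_eq_mul]; ring
  have hj : ∀ x : Fin d → ℝ, T x j = x j := by
    intro x
    show s j * x (σ j) = x j
    rw [hsj, hσj, one_mul]
  have hacc : ∀ x y : Fin d → ℝ, accept τ (T x) (T y) = accept τ x y := by
    intro x y; unfold accept; rw [hsq, hsq]
  have hgp : ∀ (m : Fin d → ℝ) (v : ℝ) (y : Fin d → ℝ),
      gpdf (T m) v (T y) = gpdf m v y := by
    intro m v y; unfold gpdf
    rw [← hsub, hsq]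
  set H : (Fin d → ℝ) → ℝ := fun x => Fhat (T x) with hH
  have hsolH : ∀ x : Fin d → ℝ,
      ∫ y, accept τ x y * (H y - H x) * gpdf (r • x) (c ^ 2) y = -(x j) := by
    intro x
    have hcv := hmp.integral_comp'
      (fun z => accept τ (T x) z * (Fhat z - Fhat (T x)) * gpdf (r • T x) (c ^ 2) z)
    calc ∫ y, accept τ x y * (H y - H x) * gpdf (r • x) (c ^ 2) y
        = ∫ y, accept τ (T x) (T y) * (Fhat (T y) - Fhat (T x))
            * gpdf (r • T x) (c ^ 2) (T y) := by
          congr 1; funext y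
          rw [hacc, ← hsmul, hgp]
      _ = ∫ z, accept τ (T x) z * (Fhat z - Fhat (T x)) * gpdf (r • T x) (c ^ 2) z := hcv
      _ = -(T x j) := hsol (T x)
      _ = -(x j) := by rw [hj]
  have hρ : Measurable fun x : Fin d → ℝ => (gpdf (0 : Fin d → ℝ) 1 x).toNNReal :=
    (gpdf_measurable 0 1).real_toNNReal
  have hgw : ∀ G : (Fin d → ℝ) → ℝ,
      ∫ x, G x ∂(gaussMeasure (0 : Fin d → ℝ) 1)
        = ∫ x, (gpdf (0 : Fin d → ℝ) 1 x).toNNReal • G x := by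
    intro G
    rw [gaussMeasure]
    exact integral_withDensity_eq_integral_smul hρ G
  have hT0 : T (0 : Fin d → ℝ) = 0 := by
    funext i
    show s i * (0 : Fin d → ℝ) (σ i) = 0
    simp
  have hρT : ∀ x, gpdf (0 : Fin d → ℝ) 1 (T x) = gpdf (0 : Fin d → ℝ) 1 x := by
    intro x
    have h := hgp 0 1 x
    rwa [hT0] at h
  have hmeanH : ∫ x, H x ∂(gaussMeasure (0 : Fin d → ℝ) 1) = 0 := by
    calc ∫ x, H x ∂(gaussMeasure (0 : Fin d → ℝ) 1)
        = ∫ x, (gpdf (0 : Fin d → ℝ) 1 x).toNNReal • H x := hgw H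
      _ = ∫ x, (gpdf (0 : Fin d → ℝ) 1 (T x)).toNNReal • Fhat (T x) := by
          congr 1; funext x
          rw [hρT]
      _ = ∫ z, (gpdf (0 : Fin d → ℝ) 1 z).toNNReal • Fhat z :=
          hmp.integral_comp' (fun z => (gpdf (0 : Fin d → ℝ) 1 z).toNNReal • Fhat z)
      _ = ∫ z, Fhat z ∂(gaussMeasure (0 : Fin d → ℝ) 1) := (hgw Fhat).symm
      _ = 0 := hmean
  have heq := huniq H hsolH hmeanH
  intro x
  exact congrFun heq x

/-- Under the same setting as Proposition 2 (standard Gaussian target in dimension `d ≥ 2`,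
proposal `N(y|rx, c²I_d)`, `F(x) = x^{(j)}`, unique mean-zero solution `F̂⁰`), `F̂⁰` is even
in each remaining coordinate, and for `d ≥ 3` it is invariant under any permutation of the
coordinates other than `j`. -/
theorem stmt10 {d : ℕ} (hd : 2 ≤ d) (j : Fin d) (r c τ : ℝ) (hc : 0 < c) (hτ : 0 < τ)
    (Fhat : (Fin d → ℝ) → ℝ)
    (hsol : ∀ x : Fin d → ℝ,
      ∫ y, accept τ x y * (Fhat y - Fhat x) * gpdf (r • x) (c ^ 2) y = -(x j))
    (hmean : ∫ x, Fhat x ∂(gaussMeasure (0 : Fin d → ℝ) 1) = 0)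
    (huniq : ∀ H : (Fin d → ℝ) → ℝ,
      (∀ x : Fin d → ℝ,
        ∫ y, accept τ x y * (H y - H x) * gpdf (r • x) (c ^ 2) y = -(x j)) →
      (∫ x, H x ∂(gaussMeasure (0 : Fin d → ℝ) 1) = 0) → H = Fhat) :
    (∀ j' : Fin d, j' ≠ j →
      ∀ x : Fin d → ℝ, Fhat (Function.update x j' (-(x j'))) = Fhat x) ∧
    (3 ≤ d → ∀ σ : Equiv.Perm (Fin d), σ j = j →
      ∀ x : Fin d → ℝ, Fhat (fun i => x (σ i)) = Fhat x) := by
  classical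
  constructor
  · intro j' hj' x
    have h := key_invariance j r c τ Fhat hsol hmean huniq 1
      (fun i => if i = j' then -1 else 1)
      (fun i => by by_cases h : i = j' <;> simp [h])
      rfl
      (by simp [Ne.symm hj'])
      x
    have hfun : (fun i => (if i = j' then (-1 : ℝ) else 1) * x ((1 : Equiv.Perm (Fin d)) i))
        = Function.update x j' (-(x j')) := by
      funext i
      by_cases h : i = j' <;> simp [Function.update_apply, h]
    rwa [hfun] at h
  · intro _ σ hσj x
    have h := key_invariance j r c τ Fhat hsol hmean huniq σ
      (fun _ => 1) (fun _ => Or.inl rfl) hσj rfl x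
    simpa using h
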